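/- Assume the separation hypothesis. Let λ, μ ∈ P_n with λ ⊴ μ and λ ≠ μ. Suppose g is a tableau of shape μ which is not standard, but such that for some 1 ≤ k ≤ n−1 the tableau obtained from g by interchanging the entries k and k+1 is standard (a Garnir tableau). If there exists a standard tableau t of shape λ with res(t) = res(g), then λ ⊴' μ. -/
import Mathlib


/-- The total order on boxes `(i,l)`: `(i,l) ≤ (i',l')` iff `l < l'`, or `l = l'`
and `i ≤ i'`. -/
def bLE {p d : ℕ} (b b' : Fin p × Fin d) : Prop :=
  b.2 < b'.2 ∨ (b.2 = b'.2 ∧ b.1 ≤ b'.1)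

/-- The strict version of the total order on boxes. -/
def bLT {p d : ℕ} (b b' : Fin p × Fin d) : Prop :=
  b.2 < b'.2 ∨ (b.2 = b'.2 ∧ b.1 < b'.1)

/-- The partial order `≤'` on boxes: `(i,l) ≤' (i',l')` iff `l < l'` or
`(i,l) = (i',l')`. -/
def bLE' {p d : ℕ} (b b' : Fin p × Fin d) : Prop :=
  b.2 < b'.2 ∨ b = b'

/-- A 3D multipartition of `n` with at most two nonempty components: either a
single column of `n` nodes on a box, or two columns of sizes `c₁ ≥ 1` and
`n - c₁ ≥ 1` on boxes `b₁ < b₂` (in the total order). -/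
inductive MP (p d n : ℕ) : Type where
  | single (b : Fin p × Fin d) : MP p d n
  | double (b₁ b₂ : Fin p × Fin d) (c₁ : ℕ)
      (hlt : bLT b₁ b₂) (hc1 : 1 ≤ c₁) (hc2 : c₁ < n) : MP p d n

/-- The dominance-type relation on multipartitions associated to a relation `rB`
on boxes; with `rB = bLE` this is `⊴` and with `rB = bLE'` this is `⊴'`.
For doubles, `a = c₁ - c₂ = 2c₁ - n`. -/
def dom {p d n : ℕ} (rB : (Fin p × Fin d) → (Fin p × Fin d) → Prop) :
    MP p d n → MP p d n → Prop
  | .single b₁, .single b₂ => rB b₁ b₂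
  | .single _, .double _ _ _ _ _ _ => False
  | .double b₁ _ _ _ _ _, .single b₃ => rB b₁ b₃
  | .double b₁ b₂ c _ _ _, .double b₃ b₄ c' _ _ _ =>
      rB b₁ b₃ ∧ rB b₂ b₄ ∧
      (|2 * (c : ℤ) - n| < |2 * (c' : ℤ) - n| ∨
       (|2 * (c : ℤ) - n| = |2 * (c' : ℤ) - n| ∧ 2 * (c : ℤ) - n ≥ 2 * (c' : ℤ) - n) ∨
       (|2 * (c : ℤ) - n| = |2 * (c' : ℤ) - n| ∧ 2 * (c : ℤ) - n < 2 * (c' : ℤ) - n ∧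
        rB b₂ b₃))

/-- A node: a (1-based) row index together with a box. -/
abbrev Nd (p d : ℕ) : Type := ℕ × (Fin p × Fin d)

/-- The set of nodes of a multipartition. -/
def nodes {p d n : ℕ} : MP p d n → Set (Nd p d)
  | .single b => {x | x.2 = b ∧ 1 ≤ x.1 ∧ x.1 ≤ n}
  | .double b₁ b₂ c₁ _ _ _ =>
      {x | (x.2 = b₁ ∧ 1 ≤ x.1 ∧ x.1 ≤ c₁) ∨ (x.2 = b₂ ∧ 1 ≤ x.1 ∧ x.1 ≤ n - c₁)}

/-- A tableau of shape `l`: a bijection from `{1, …, n}` (modelled as `Fin n`,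
with `m : Fin n` representing the entry `m + 1`) onto the nodes of `l`. -/
def IsTab {p d n : ℕ} (l : MP p d n) (t : Fin n → Nd p d) : Prop :=
  Function.Injective t ∧ Set.range t = nodes l

/-- A standard tableau: a tableau in which, within each column, the entries
increase with the row index. -/
def IsStd {p d n : ℕ} (l : MP p d n) (t : Fin n → Nd p d) : Prop :=
  IsTab l t ∧
  ∀ m m' : Fin n, (t m).2 = (t m').2 → (t m).1 < (t m').1 → m < m'

/-- The residue of a node: the node in row `a` on box `(i,l)` has residue
`(i, j_l + 1 − a) ∈ ℤ/pℤ × ℤ/eℤ`. -/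
def resNd {p d : ℕ} (e : ℕ) (j : Fin d → ZMod e) (x : Nd p d) : ZMod p × ZMod e :=
  ((x.2.1 : ZMod p), j x.2.2 + 1 - (x.1 : ZMod e))

/-- The separation hypothesis: the `2r` elements `(i, j_l)` and `(i, j_l − 1)`,
for `(i,l) ∈ 𝒦`, are pairwise distinct. -/
def SepHyp (p d e : ℕ) (j : Fin d → ZMod e) : Prop :=
  Function.Injective (fun x : (Fin p × Fin d) × Bool =>
    (((x.1.1 : ZMod p), j x.1.2 - (if x.2 then 1 else 0)) : ZMod p × ZMod e))

/-- The total order on nodes: `(a,(i,l)) < (a',(i',l'))` iff `a < a'`, or `a = a'`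
and `l < l'`, or `a = a'`, `l = l'` and `i < i'`. -/
def ndLT {p d : ℕ} (x y : Nd p d) : Prop :=
  x.1 < y.1 ∨ (x.1 = y.1 ∧ (x.2.2 < y.2.2 ∨ (x.2.2 = y.2.2 ∧ x.2.1 < y.2.1)))

section AuxLemmas

variable {p d n : ℕ}

lemma finCastInj {x y : Fin p} (h : (x : ZMod p) = (y : ZMod p)) : x = y := by
  haveI : NeZero p := ⟨x.pos.ne'⟩
  have := congrArg ZMod.val h
  rwa [ZMod.val_cast_of_lt x.isLt, ZMod.val_cast_of_lt y.isLt, ← Fin.ext_iff] at this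

lemma bLT_ne {x y : Fin p × Fin d} (h : bLT x y) : x ≠ y := by
  rintro rfl
  rcases h with h | ⟨_, h⟩ <;> exact lt_irrefl _ h

lemma bLT_asymm {x y : Fin p × Fin d} (h : bLT x y) (h' : bLT y x) : False := by
  rcases h with h | ⟨e1, h⟩ <;> rcases h' with h' | ⟨e2, h'⟩
  · exact lt_asymm h h'
  · rw [e2] at h; exact lt_irrefl _ h
  · rw [e1] at h'; exact lt_irrefl _ h'
  · exact lt_asymm h h'

lemma bLE_up {x y : Fin p × Fin d} (h : bLE x y) (he : x.1 = y.1) : bLE' x y := by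
  rcases h with h | ⟨h1, _⟩
  · exact Or.inl h
  · exact Or.inr (Prod.ext he h1)

lemma mem_nodes_row_pos {l : MP p d n} {x : Nd p d} (hx : x ∈ nodes l) : 1 ≤ x.1 := by
  cases l <;> simp only [nodes, Set.mem_setOf_eq] at hx <;> tauto

lemma mem_nodes_closed {l : MP p d n} {x : Nd p d} (hx : x ∈ nodes l) {h : ℕ}
    (h1 : 1 ≤ h) (h2 : h ≤ x.1) : (h, x.2) ∈ nodes l := by
  cases l <;> simp only [nodes, Set.mem_setOf_eq] at hx ⊢
  · exact ⟨hx.1, h1, h2.trans hx.2.2⟩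
  · rcases hx with ⟨hb, _, hc⟩ | ⟨hb, _, hc⟩
    · exact Or.inl ⟨hb, h1, h2.trans hc⟩
    · exact Or.inr ⟨hb, h1, h2.trans hc⟩

open Finset in
lemma row_eq {l : MP p d n} {u : Fin n → Nd p d} (hu : IsStd l u) (a : Fin n) :
    (u a).1 = (univ.filter fun a' : Fin n => a' < a ∧ (u a').2 = (u a).2).card + 1 := by
  obtain ⟨⟨hinj, hrange⟩, hstd⟩ := hu
  have hmem : ∀ b, u b ∈ nodes l := fun b => hrange ▸ Set.mem_range_self b
  have key : (univ.filter fun a' : Fin n => a' < a ∧ (u a').2 = (u a).2).card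
      = (Finset.Ico 1 (u a).1).card := by
    apply Finset.card_bij (fun a' _ => (u a').1)
    · intro a' ha'
      simp only [mem_filter, mem_univ, true_and] at ha'
      rw [Finset.mem_Ico]
      refine ⟨mem_nodes_row_pos (hmem a'), ?_⟩
      rcases lt_trichotomy (u a').1 (u a).1 with h | h | h
      · exact h
      · exact absurd (hinj (Prod.ext h ha'.2)) (ne_of_lt ha'.1)
      · exact absurd (hstd a a' ha'.2.symm h) (asymm ha'.1)
    · intro a₁ h₁ a₂ h₂ hval
      simp only [mem_filter, mem_univ, true_and] at h₁ h₂
      exact hinj (Prod.ext hval (h₁.2.trans h₂.2.symm))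
    · intro h hh
      rw [Finset.mem_Ico] at hh
      have hnode : ((h, (u a).2) : Nd p d) ∈ nodes l :=
        mem_nodes_closed (hmem a) hh.1 (le_of_lt hh.2)
      rw [← hrange] at hnode
      obtain ⟨a', ha'⟩ := hnode
      refine ⟨a', ?_, by rw [ha']⟩
      simp only [mem_filter, mem_univ, true_and]
      exact ⟨hstd a' a (by rw [ha']) (by rw [ha']; exact hh.2), by rw [ha']⟩
  rw [key, Nat.card_Ico]
  have := mem_nodes_row_pos (hmem a)
  omega

open Finset in
lemma card_box_eq {C₁ C₂ : Fin p × Fin d} {c : ℕ} {hlt : bLT C₁ C₂} {hc1 : 1 ≤ c}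
    {hc2 : c < n} {u : Fin n → Nd p d}
    (hu : IsTab (MP.double C₁ C₂ c hlt hc1 hc2) u) :
    (univ.filter fun a : Fin n => (u a).2 = C₁).card = c := by
  obtain ⟨hinj, hrange⟩ := hu
  have hne := bLT_ne hlt
  have hmem : ∀ b, u b ∈ nodes (MP.double C₁ C₂ c hlt hc1 hc2) :=
    fun b => hrange ▸ Set.mem_range_self b
  have key : (univ.filter fun a : Fin n => (u a).2 = C₁).card = (Finset.Icc 1 c).card := by
    apply Finset.card_bij (fun a' _ => (u a').1)
    · intro a' ha'
      simp only [mem_filter, mem_univ, true_and] at ha'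
      have hm := hmem a'
      simp only [nodes, Set.mem_setOf_eq] at hm
      rcases hm with ⟨_, h1, h2⟩ | ⟨hb, _, _⟩
      · exact Finset.mem_Icc.mpr ⟨h1, h2⟩
      · exact absurd (ha'.symm.trans hb) hne
    · intro a₁ h₁ a₂ h₂ hval
      simp only [mem_filter, mem_univ, true_and] at h₁ h₂
      exact hinj (Prod.ext hval (h₁.trans h₂.symm))
    · intro h hh
      rw [Finset.mem_Icc] at hh
      have hnode : ((h, C₁) : Nd p d) ∈ nodes (MP.double C₁ C₂ c hlt hc1 hc2) :=
        Or.inl ⟨rfl, hh.1, hh.2⟩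
      rw [← hrange] at hnode
      obtain ⟨a', ha'⟩ := hnode
      refine ⟨a', ?_, by rw [ha']⟩
      simp only [mem_filter, mem_univ, true_and]
      rw [ha']
  rw [key, Nat.card_Icc]
  omega

lemma sepBox {e : ℕ} {j : Fin d → ZMod e} (hsep : SepHyp p d e j)
    {b b' : Fin p × Fin d} {u v : Bool}
    (h1 : (b.1 : ZMod p) = (b'.1 : ZMod p))
    (h2 : j b.2 - (if u then 1 else 0) = j b'.2 - (if v then 1 else 0)) :
    b = b' ∧ u = v := by
  have h := hsep (a₁ := (b, u)) (a₂ := (b', v)) (Prod.ext h1 h2)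
  exact ⟨congrArg Prod.fst h, congrArg Prod.snd h⟩

lemma garnir_struct {m : MP p d n} {g : Fin n → Nd p d}
    (hg : IsTab m g) (hgn : ¬ IsStd m g) {i₀ i₁ : Fin n}
    (hii : (i₀ : ℕ) + 1 = (i₁ : ℕ))
    (hs : IsStd m (g ∘ Equiv.swap i₀ i₁)) :
    (g i₀).2 = (g i₁).2 ∧ (g i₀).1 = (g i₁).1 + 1 := by
  have hne01 : i₀ ≠ i₁ := by
    intro h; rw [h] at hii; omega
  have hs0 : (g ∘ Equiv.swap i₀ i₁) i₀ = g i₁ := by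
    simp [Equiv.swap_apply_left]
  have hs1 : (g ∘ Equiv.swap i₀ i₁) i₁ = g i₀ := by
    simp [Equiv.swap_apply_right]
  have vne : ∀ {x y : Fin n}, x ≠ y → (x : ℕ) ≠ (y : ℕ) := fun h hv => h (Fin.ext hv)
  have hbox : (g i₀).2 = (g i₁).2 := by
    by_contra hbne
    apply hgn
    refine ⟨hg, ?_⟩
    intro a b hab hrow
    have hgs : ∀ x, (g ∘ Equiv.swap i₀ i₁) (Equiv.swap i₀ i₁ x) = g x := fun x => by simp
    have hlt : Equiv.swap i₀ i₁ a < Equiv.swap i₀ i₁ b :=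
      hs.2 _ _ (by rw [hgs, hgs]; exact hab) (by rw [hgs, hgs]; exact hrow)
    have hv := Fin.lt_def.mp hlt
    have trich : ∀ x : Fin n, x = i₀ ∨ x = i₁ ∨ (x ≠ i₀ ∧ x ≠ i₁) := by
      intro x
      rcases eq_or_ne x i₀ with h | h
      · exact Or.inl h
      · rcases eq_or_ne x i₁ with h' | h'
        · exact Or.inr (Or.inl h')
        · exact Or.inr (Or.inr ⟨h, h'⟩)
    rcases trich a with ha | ha | ⟨ha, ha'⟩
    · have sa : ((Equiv.swap i₀ i₁ a : Fin n) : ℕ) = (i₁ : ℕ) := by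
        rw [ha, Equiv.swap_apply_left]
      have va := congrArg Fin.val ha
      rcases trich b with hb | hb | ⟨hb, hb'⟩
      · have sb : ((Equiv.swap i₀ i₁ b : Fin n) : ℕ) = (i₁ : ℕ) := by
          rw [hb, Equiv.swap_apply_left]
        rw [sa, sb] at hv; omega
      · have vb := congrArg Fin.val hb
        exact Fin.lt_def.mpr (by omega)
      · have sb : ((Equiv.swap i₀ i₁ b : Fin n) : ℕ) = (b : ℕ) := by
          rw [Equiv.swap_apply_of_ne_of_ne hb hb']
        rw [sa, sb] at hv
        exact Fin.lt_def.mpr (by omega)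
    · have sa : ((Equiv.swap i₀ i₁ a : Fin n) : ℕ) = (i₀ : ℕ) := by
        rw [ha, Equiv.swap_apply_right]
      have va := congrArg Fin.val ha
      rcases trich b with hb | hb | ⟨hb, hb'⟩
      · rw [ha, hb] at hab
        exact absurd hab.symm hbne
      · have sb : ((Equiv.swap i₀ i₁ b : Fin n) : ℕ) = (i₀ : ℕ) := by
          rw [hb, Equiv.swap_apply_right]
        rw [sa, sb] at hv
        exact absurd hv (lt_irrefl _)
      · have sb : ((Equiv.swap i₀ i₁ b : Fin n) : ℕ) = (b : ℕ) := by
          rw [Equiv.swap_apply_of_ne_of_ne hb hb']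
        rw [sa, sb] at hv
        have vb' : (b : ℕ) ≠ (i₁ : ℕ) := fun h => hb' (Fin.ext h)
        exact Fin.lt_def.mpr (by omega)
    · have sa : ((Equiv.swap i₀ i₁ a : Fin n) : ℕ) = (a : ℕ) := by
        rw [Equiv.swap_apply_of_ne_of_ne ha ha']
      rcases trich b with hb | hb | ⟨hb, hb'⟩
      · have sb : ((Equiv.swap i₀ i₁ b : Fin n) : ℕ) = (i₁ : ℕ) := by
          rw [hb, Equiv.swap_apply_left]
        rw [sa, sb] at hv
        have va' : (a : ℕ) ≠ (i₀ : ℕ) := fun h => ha (Fin.ext h)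
        have vb := congrArg Fin.val hb
        exact Fin.lt_def.mpr (by omega)
      · have sb : ((Equiv.swap i₀ i₁ b : Fin n) : ℕ) = (i₀ : ℕ) := by
          rw [hb, Equiv.swap_apply_right]
        rw [sa, sb] at hv
        have vb := congrArg Fin.val hb
        exact Fin.lt_def.mpr (by omega)
      · have sb : ((Equiv.swap i₀ i₁ b : Fin n) : ℕ) = (b : ℕ) := by
          rw [Equiv.swap_apply_of_ne_of_ne hb hb']
        rw [sa, sb] at hv
        exact Fin.lt_def.mpr (by omega)
  refine ⟨hbox, ?_⟩
  have hginj : Function.Injective g := hg.1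
  rcases lt_trichotomy (g i₁).1 (g i₀).1 with h | h | h
  · by_contra hgap
    have hgap' : (g i₁).1 + 1 < (g i₀).1 := by omega
    have hgmem : g i₀ ∈ nodes m := hg.2 ▸ Set.mem_range_self i₀
    have hnode : (((g i₁).1 + 1, (g i₀).2) : Nd p d) ∈ nodes m :=
      mem_nodes_closed hgmem (by omega) (le_of_lt hgap')
    rw [← hs.1.2] at hnode
    obtain ⟨a', ha'⟩ := hnode
    have l1 : i₀ < a' := hs.2 i₀ a' (by rw [hs0, ha']; exact hbox.symm) (by rw [hs0, ha']; omega)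
    have l2 : a' < i₁ := hs.2 a' i₁ (by rw [hs1, ha']) (by rw [hs1, ha']; exact hgap')
    have v1 := Fin.lt_def.mp l1
    have v2 := Fin.lt_def.mp l2
    omega
  · have : g i₀ = g i₁ := Prod.ext h.symm hbox
    have := congrArg Fin.val (hginj this)
    omega
  · have := hs.2 i₁ i₀ (by rw [hs1, hs0]; exact hbox) (by rw [hs0, hs1]; exact h)
    have := Fin.lt_def.mp this
    omega

end AuxLemmas

/-- under the separation hypothesis, if `λ ⊴ μ`, `λ ≠ μ`, `g` is a
Garnir tableau of shape `μ` (not standard, but becomes standard upon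
interchanging the entries `k` and `k+1` for some `1 ≤ k ≤ n−1`), and some
standard tableau `t` of shape `λ` has `res(t) = res(g)`, then `λ ⊴' μ`. -/
theorem dom_bLE'_of_res_eq_garnir (p d n : ℕ) (hp : 1 ≤ p) (hd : 1 ≤ d) (hn : 1 ≤ n)
    (e : ℕ) (j : Fin d → ZMod e) (hsep : SepHyp p d e j)
    (l m : MP p d n) (hle : dom bLE l m) (hne : l ≠ m)
    (g : Fin n → Nd p d) (hg : IsTab m g) (hgnstd : ¬ IsStd m g)
    (hgarnir : ∃ k : ℕ, ∃ (hk1 : 1 ≤ k) (hk2 : k ≤ n - 1),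
      IsStd m (g ∘ Equiv.swap (⟨k - 1, by omega⟩ : Fin n) (⟨k, by omega⟩ : Fin n)))
    (t : Fin n → Nd p d) (ht : IsStd l t)
    (hres : ∀ a : Fin n, resNd e j (t a) = resNd e j (g a)) :
    dom bLE' l m := by
  have htmem : ∀ a, t a ∈ nodes l := fun a => ht.1.2 ▸ Set.mem_range_self a
  have hgmem : ∀ a, g a ∈ nodes m := fun a => hg.2 ▸ Set.mem_range_self a
  have hfst : ∀ a, ((t a).2.1 : ZMod p) = ((g a).2.1 : ZMod p) :=
    fun a => congrArg Prod.fst (hres a)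
  have hsnd : ∀ a, j (t a).2.2 + 1 - ((t a).1 : ZMod e)
      = j (g a).2.2 + 1 - ((g a).1 : ZMod e) :=
    fun a => congrArg Prod.snd (hres a)
  cases m with
  | single B =>
    have hgB : ∀ a, (g a).2 = B := fun a => (hgmem a).1
    cases l with
    | single C =>
      have a0 : Fin n := ⟨0, by omega⟩
      have hC : (t a0).2 = C := (htmem a0).1
      have hcast : (C.1 : ZMod p) = (B.1 : ZMod p) := by
        have h := hfst a0
        rw [hC, hgB a0] at h
        exact h
      exact bLE_up (show bLE C B from hle) (finCastInj hcast)
    | double C₁ C₂ c hltl hc1 hc2 =>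
      have hnode : ((1, C₁) : Nd p d) ∈ Set.range t := by
        rw [ht.1.2]
        exact Or.inl ⟨rfl, le_refl 1, hc1⟩
      obtain ⟨a1, ha1⟩ := hnode
      have hcast : (C₁.1 : ZMod p) = (B.1 : ZMod p) := by
        have h := hfst a1
        rw [ha1, hgB a1] at h
        exact h
      exact bLE_up (show bLE C₁ B from hle) (finCastInj hcast)
  | double B₁ B₂ c' hltm hc1' hc2' =>
    cases l with
    | single C => exact (show False from hle).elim
    | double C₁ C₂ c hltl hc1 hc2 =>
      have hCne : C₁ ≠ C₂ := bLT_ne hltl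
      have hBne : B₁ ≠ B₂ := bLT_ne hltm
      have htb : ∀ a, (t a).2 = C₁ ∨ (t a).2 = C₂ := by
        intro a
        rcases htmem a with ⟨h, _⟩ | ⟨h, _⟩
        · exact Or.inl h
        · exact Or.inr h
      have hgb : ∀ a, (g a).2 = B₁ ∨ (g a).2 = B₂ := by
        intro a
        rcases hgmem a with ⟨h, _⟩ | ⟨h, _⟩
        · exact Or.inl h
        · exact Or.inr h
      obtain ⟨aC1, haC1⟩ : ((1, C₁) : Nd p d) ∈ Set.range t := by
        rw [ht.1.2]; exact Or.inl ⟨rfl, le_refl 1, hc1⟩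
      obtain ⟨aC2, haC2⟩ : ((1, C₂) : Nd p d) ∈ Set.range t := by
        rw [ht.1.2]; exact Or.inr ⟨rfl, le_refl 1, by omega⟩
      obtain ⟨aB1, haB1⟩ : ((1, B₁) : Nd p d) ∈ Set.range g := by
        rw [hg.2]; exact Or.inl ⟨rfl, le_refl 1, hc1'⟩
      obtain ⟨aB2, haB2⟩ : ((1, B₂) : Nd p d) ∈ Set.range g := by
        rw [hg.2]; exact Or.inr ⟨rfl, le_refl 1, by omega⟩
      obtain ⟨hle1, hle2, hle3⟩ :
          bLE C₁ B₁ ∧ bLE C₂ B₂ ∧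
          (|2 * (c : ℤ) - n| < |2 * (c' : ℤ) - n| ∨
           (|2 * (c : ℤ) - n| = |2 * (c' : ℤ) - n| ∧ 2 * (c : ℤ) - n ≥ 2 * (c' : ℤ) - n) ∨
           (|2 * (c : ℤ) - n| = |2 * (c' : ℤ) - n| ∧ 2 * (c : ℤ) - n < 2 * (c' : ℤ) - n ∧
            bLE C₂ B₁)) := hle
      by_cases hCC : (C₁.1 : ZMod p) = (C₂.1 : ZMod p)
      · -- all four boxes have the same first coordinate
        have hB1C : (B₁.1 : ZMod p) = (C₁.1 : ZMod p) := by
          have h := hfst aB1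
          rw [haB1] at h
          rcases htb aB1 with hh | hh <;> rw [hh] at h
          · exact h.symm
          · exact h.symm.trans hCC.symm
        have hB2C : (B₂.1 : ZMod p) = (C₁.1 : ZMod p) := by
          have h := hfst aB2
          rw [haB2] at h
          rcases htb aB2 with hh | hh <;> rw [hh] at h
          · exact h.symm
          · exact h.symm.trans hCC.symm
        refine ⟨bLE_up hle1 (finCastInj hB1C.symm), bLE_up hle2 (finCastInj (hCC.symm.trans hB2C.symm)), ?_⟩
        rcases hle3 with h | h | ⟨h1, h2, h3⟩
        · exact Or.inl h
        · exact Or.inr (Or.inl h)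
        · exact Or.inr (Or.inr ⟨h1, h2, bLE_up h3 (finCastInj (hCC.symm.trans hB1C.symm))⟩)
      · by_cases hC1B1 : (C₁.1 : ZMod p) = (B₁.1 : ZMod p)
        · -- uncrossed case
          have hC2B2 : (C₂.1 : ZMod p) = (B₂.1 : ZMod p) := by
            have h := hfst aC2
            rw [haC2] at h
            rcases hgb aC2 with hh | hh <;> rw [hh] at h
            · exact absurd (h.trans hC1B1.symm).symm hCC
            · exact h
          have hclass : ∀ a, ((t a).2 = C₁ ↔ (g a).2 = B₁) := by
            intro a
            constructor
            · intro h
              rcases hgb a with hh | hh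
              · exact hh
              · exfalso
                have hf := hfst a
                rw [h, hh] at hf
                exact hCC (hf.trans hC2B2.symm)
            · intro h
              rcases htb a with hh | hh
              · exact hh
              · exfalso
                have hf := hfst a
                rw [h, hh] at hf
                exact hCC ((hf.trans hC1B1.symm).symm)
          have hcc' : c = c' := by
            have e1 : (Finset.univ.filter fun a : Fin n => (t a).2 = C₁).card = c :=
              card_box_eq ht.1
            have e2 : (Finset.univ.filter fun a : Fin n => (g a).2 = B₁).card = c' :=
              card_box_eq hg
            rw [← e1, ← e2]
            congr 1
            exact Finset.filter_congr fun a _ => hclass a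
          subst hcc'
          exact ⟨bLE_up hle1 (finCastInj hC1B1), bLE_up hle2 (finCastInj hC2B2),
            Or.inr (Or.inl ⟨rfl, le_refl _⟩)⟩
        · -- crossed case: contradiction
          exfalso
          have hC1B2 : (C₁.1 : ZMod p) = (B₂.1 : ZMod p) := by
            have h := hfst aC1
            rw [haC1] at h
            rcases hgb aC1 with hh | hh <;> rw [hh] at h
            · exact absurd h hC1B1
            · exact h
          have hC2B1 : (C₂.1 : ZMod p) = (B₁.1 : ZMod p) := by
            have h := hfst aC2
            rw [haC2] at h
            rcases hgb aC2 with hh | hh <;> rw [hh] at h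
            · exact h
            · exact absurd (hC1B2.trans h.symm) hCC
          obtain ⟨k, hk1, hk2, hsstd0⟩ := hgarnir
          set i₀ : Fin n := ⟨k - 1, by omega⟩ with hi₀
          set i₁ : Fin n := ⟨k, by omega⟩ with hi₁
          have hsstd : IsStd (MP.double B₁ B₂ c' hltm hc1' hc2') (g ∘ Equiv.swap i₀ i₁) := hsstd0
          have hii : (i₀ : ℕ) + 1 = (i₁ : ℕ) := by simp [hi₀, hi₁]; omega
          obtain ⟨hgbox, hgrow⟩ := garnir_struct hg hgnstd hii hsstd
          set s := g ∘ Equiv.swap i₀ i₁ with hsdef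
          have hs0 : s i₀ = g i₁ := by simp [hsdef]
          have hs1 : s i₁ = g i₀ := by simp [hsdef]
          have hsa : ∀ a, a ≠ i₀ → a ≠ i₁ → s a = g a := fun a h0 h1 => by
            simp [hsdef, Equiv.swap_apply_of_ne_of_ne h0 h1]
          have hbgs : ∀ a, (g a).2 = (s a).2 := by
            intro a
            rcases eq_or_ne a i₀ with h | h0
            · rw [h, hs0]; exact hgbox
            · rcases eq_or_ne a i₁ with h | h1
              · rw [h, hs1]; exact hgbox.symm
              · rw [hsa a h0 h1]
          have hsb : ∀ a, (s a).2 = B₁ ∨ (s a).2 = B₂ := by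
            intro a; rw [← hbgs a]; exact hgb a
          have hcorr1 : ∀ a, ((t a).2 = C₁ ↔ (s a).2 = B₂) := by
            intro a
            have hf := hfst a
            rw [hbgs a] at hf
            constructor
            · intro h
              rw [h] at hf
              rcases hsb a with hh | hh
              · rw [hh] at hf; exact absurd hf hC1B1
              · exact hh
            · intro h
              rw [h] at hf
              rcases htb a with hh | hh
              · exact hh
              · rw [hh] at hf
                exact absurd (hC1B2.trans hf.symm) hCC
          have hcorr2 : ∀ a, ((t a).2 = C₂ ↔ (s a).2 = B₁) := by
            intro a
            constructor
            · intro h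
              rcases hsb a with hh | hh
              · exact hh
              · have := (hcorr1 a).mpr hh
                rw [h] at this
                exact absurd this.symm hCne
            · intro h
              rcases htb a with hh | hh
              · have := (hcorr1 a).mp hh
                rw [h] at this
                exact absurd this hBne
              · exact hh
          have hrowc : ∀ a, (t a).1 = (s a).1 := by
            intro a
            rw [row_eq ht a, row_eq hsstd a]
            have hfeq : (Finset.univ.filter fun a' : Fin n => a' < a ∧ (t a').2 = (t a).2)
                = (Finset.univ.filter fun a' : Fin n => a' < a ∧ (s a').2 = (s a).2) := by
              refine Finset.filter_congr fun a' _ => ?_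
              have hiff : ((t a').2 = (t a).2 ↔ (s a').2 = (s a).2) := by
                rcases htb a with hA | hA
                · rw [hA, (hcorr1 a).mp hA]; exact hcorr1 a'
                · rw [hA, (hcorr2 a).mp hA]; exact hcorr2 a'
              exact and_congr_right fun _ => hiff
            rw [hfeq]
          have ident : ∀ a, a ≠ i₀ → a ≠ i₁ → (s a).1 = 1 → (t a).2 = (s a).2 := by
            intro a h0 h1 hr1
            have hrt : (t a).1 = 1 := (hrowc a).trans hr1
            have hA : ((t a).2.1 : ZMod p) = ((s a).2.1 : ZMod p) := by
              rw [← hbgs a]; exact hfst a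
            have hB := hsnd a
            rw [← hsa a h0 h1] at hB
            rw [hrt, hr1] at hB
            have hB' : j (t a).2.2 - (if (false : Bool) then 1 else 0)
                = j (s a).2.2 - (if (false : Bool) then 1 else 0) := by
              simp only [Bool.false_eq_true, if_false]
              push_cast at hB
              linear_combination hB
            exact (sepBox hsep hA hB').1
          obtain ⟨b1, hb1⟩ : ((1, B₁) : Nd p d) ∈ Set.range s := by
            rw [hsstd.1.2]; exact Or.inl ⟨rfl, le_refl 1, hc1'⟩
          obtain ⟨b2, hb2⟩ : ((1, B₂) : Nd p d) ∈ Set.range s := by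
            rw [hsstd.1.2]; exact Or.inr ⟨rfl, le_refl 1, by omega⟩
          by_cases hcrit : b1 = i₀ ∨ b2 = i₀
          · -- the column of entries k, k+1 has its top at row 1
            have hrow0 : (s i₀).1 = 1 := by
              rcases hcrit with h | h
              · rw [← h, hb1]
              · rw [← h, hb2]
            have hrt : (t i₀).1 = 1 := (hrowc i₀).trans hrow0
            have hgrow2 : (g i₀).1 = 2 := by
              have : (g i₁).1 = 1 := by rw [← hs0]; exact hrow0
              omega
            have hA : ((t i₀).2.1 : ZMod p) = ((g i₀).2.1 : ZMod p) := hfst i₀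
            have hB := hsnd i₀
            rw [hrt, hgrow2] at hB
            have hB' : j (t i₀).2.2 - (if (false : Bool) then 1 else 0)
                = j (g i₀).2.2 - (if (true : Bool) then 1 else 0) := by
              simp only [Bool.false_eq_true, if_false, if_true]
              push_cast at hB
              linear_combination hB
            have := (sepBox hsep hA hB').2
            simp at this
          · push_neg at hcrit
            obtain ⟨hb1i0, hb2i0⟩ := hcrit
            have hgpos : 1 ≤ (g i₁).1 := mem_nodes_row_pos (hgmem i₁)
            have hb1i1 : b1 ≠ i₁ := by
              intro hEq
              rw [hEq, hs1] at hb1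
              have : (g i₀).1 = 1 := by rw [hb1]
              omega
            have hb2i1 : b2 ≠ i₁ := by
              intro hEq
              rw [hEq, hs1] at hb2
              have : (g i₀).1 = 1 := by rw [hb2]
              omega
            have hid1 : (t b1).2 = B₁ := by
              have := ident b1 hb1i0 hb1i1 (by rw [hb1])
              rw [this, hb1]
            have hid2 : (t b2).2 = B₂ := by
              have := ident b2 hb2i0 hb2i1 (by rw [hb2])
              rw [this, hb2]
            have hC2eq : C₂ = B₁ := by
              have h := (hcorr2 b1).mpr (by rw [hb1])
              exact h.symm.trans hid1
            have hC1eq : C₁ = B₂ := by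
              have h := (hcorr1 b2).mpr (by rw [hb2])
              exact h.symm.trans hid2
            rw [hC1eq, hC2eq] at hltl
            exact bLT_asymm hltm hltl
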